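/- Let f : ℝ^n → ℝ be differentiable and satisfy the Regularity Condition RC(μ,λ) globally with global minimizer x⋆ (so ∇f(x⋆) = 0). Let A ∈ ℝ^{2×2}, B ∈ ℝ^{2×1}, C ∈ ℝ^{1×2}, D ∈ ℝ, and let sequences φ_k ∈ ℝ^{2n}, y_k, u_k ∈ ℝ^n satisfy φ_{k+1} = (A ⊗ I_n)φ_k + (B ⊗ I_n)u_k, y_k = (C ⊗ I_n)φ_k + D u_k, u_k = ∇f(y_k). Let φ⋆ = (x⋆, x⋆) ∈ ℝ^{2n} satisfy (A ⊗ I_n)φ⋆ = φ⋆ and (C ⊗ I_n)φ⋆ = x⋆. Suppose there exist a symmetric positive definite P ∈ ℝ^{2×2} and ρ ∈ (0,1) such that the 3×3 matrix [[AᵀPA − ρ²P, AᵀPB],[BᵀPA, BᵀPB]] + [[C, D],[0_{1×2}, 1]]ᵀ [[−λ, 1],[1, −μ]] [[C, D],[0_{1×2}, 1]] is negative semidefinite. Then for all k ≥ 0, ‖φ_k − φ⋆‖ ≤ √(cond(P)) ρ^k ‖φ_0 − φ⋆‖, where cond(P) denotes the ratio of the largest to the smallest eigenvalue of P. -/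

import Mathlib

open Matrix InnerProductSpace Kronecker

private lemma kron_one_mulVec' {α β : Type*} [Fintype α] [Fintype β] {n : ℕ}
    (M : Matrix α β ℝ) (v : β × Fin n → ℝ) (a : α) (i : Fin n) :
    (M ⊗ₖ (1 : Matrix (Fin n) (Fin n) ℝ)).mulVec v (a, i) = ∑ b, M a b * v (b, i) := by
  simp only [Matrix.mulVec, dotProduct, Fintype.sum_prod_type, kroneckerMap_apply,
    Matrix.one_apply, mul_ite, mul_one, mul_zero, ite_mul, zero_mul, Finset.sum_ite_eq,
    Finset.mem_univ, if_true]

private lemma quad_form_bounds' (P : Matrix (Fin 2) (Fin 2) ℝ) (hP : P.IsHermitian)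
    (x : Fin 2 → ℝ) :
    (⨅ i, hP.eigenvalues i) * (x ⬝ᵥ x) ≤ x ⬝ᵥ P *ᵥ x ∧
      x ⬝ᵥ P *ᵥ x ≤ (⨆ i, hP.eigenvalues i) * (x ⬝ᵥ x) := by
  set W : Matrix (Fin 2) (Fin 2) ℝ := (hP.eigenvectorUnitary : Matrix (Fin 2) (Fin 2) ℝ) with hW
  have hWmem := (hP.eigenvectorUnitary).2
  have hWW : W * star W = 1 := (Matrix.mem_unitaryGroup_iff).mp hWmem
  set z : Fin 2 → ℝ := (star W) *ᵥ x with hz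
  have h1 : x ⬝ᵥ P *ᵥ x = ∑ j, hP.eigenvalues j * z j ^ 2 := by
    conv_lhs => rw [hP.spectral_theorem, Unitary.conjStarAlgAut_apply]
    rw [← Matrix.mulVec_mulVec, ← Matrix.mulVec_mulVec, Matrix.dotProduct_mulVec]
    have hxW : x ᵥ* W = z := by
      rw [hz, Matrix.star_eq_conjTranspose, Matrix.conjTranspose_eq_transpose_of_trivial,
        Matrix.mulVec_transpose]
    rw [hxW]
    simp only [dotProduct, Matrix.mulVec_diagonal, Fin.sum_univ_two, hz, hW,
      RCLike.ofReal_real_eq_id, Function.comp_apply, id_eq]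
    ring
  have h2 : ∑ j, z j ^ 2 = x ⬝ᵥ x := by
    have : z ⬝ᵥ z = x ⬝ᵥ x := by
      rw [hz, Matrix.dotProduct_mulVec, Matrix.star_eq_conjTranspose,
        Matrix.conjTranspose_eq_transpose_of_trivial, Matrix.mulVec_transpose,
        Matrix.vecMul_vecMul]
      rw [Matrix.star_eq_conjTranspose, Matrix.conjTranspose_eq_transpose_of_trivial] at hWW
      rw [hWW, Matrix.vecMul_one]
    rw [← this]; simp [dotProduct, sq]
  constructor
  · rw [h1, ← h2, Finset.mul_sum]
    apply Finset.sum_le_sum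
    intro j _
    exact mul_le_mul_of_nonneg_right (ciInf_le (Finite.bddBelow_range _) j) (sq_nonneg _)
  · rw [h1, ← h2, Finset.mul_sum]
    apply Finset.sum_le_sum
    intro j _
    exact mul_le_mul_of_nonneg_right (le_ciSup (Finite.bddAbove_range _) j) (sq_nonneg _)

private lemma key_quad_ineq' (A : Matrix (Fin 2) (Fin 2) ℝ) (B : Matrix (Fin 2) (Fin 1) ℝ)
    (C : Matrix (Fin 1) (Fin 2) ℝ) (D : ℝ) (P : Matrix (Fin 2) (Fin 2) ℝ)
    (ρ lam μ : ℝ)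
    (hLMI : (-(fromBlocks (Aᵀ * P * A - ρ ^ 2 • P) (Aᵀ * P * B) (Bᵀ * P * A) (Bᵀ * P * B) +
      (fromBlocks C (D • (1 : Matrix (Fin 1) (Fin 1) ℝ)) 0 (1 : Matrix (Fin 1) (Fin 1) ℝ))ᵀ *
      (fromBlocks (-lam • (1 : Matrix (Fin 1) (Fin 1) ℝ)) (1 : Matrix (Fin 1) (Fin 1) ℝ)
        (1 : Matrix (Fin 1) (Fin 1) ℝ) (-μ • (1 : Matrix (Fin 1) (Fin 1) ℝ))) *
      (fromBlocks C (D • (1 : Matrix (Fin 1) (Fin 1) ℝ)) 0 (1 : Matrix (Fin 1) (Fin 1) ℝ)))).PosSemidef)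
    (x : Fin 2 → ℝ) (v : ℝ) :
    (A *ᵥ x + B *ᵥ fun _ => v) ⬝ᵥ P *ᵥ (A *ᵥ x + B *ᵥ fun _ => v) ≤
      ρ ^ 2 * (x ⬝ᵥ P *ᵥ x) +
      (lam * ((C *ᵥ x) 0 + D * v) ^ 2 - 2 * (v * ((C *ᵥ x) 0 + D * v)) + μ * v ^ 2) := by
  have h := hLMI.dotProduct_mulVec_nonneg (Sum.elim x fun _ => v)
  simp only [star_trivial, Matrix.mulVec, dotProduct, Matrix.neg_apply, Matrix.add_apply,
    Matrix.fromBlocks, Matrix.mul_apply, Matrix.sub_apply, Matrix.smul_apply, Matrix.one_apply,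
    Matrix.transpose_apply, Matrix.of_apply, Sum.elim_inl, Sum.elim_inr, Fintype.sum_sum_type,
    Fin.sum_univ_two, Fin.sum_univ_one, Matrix.zero_apply, smul_eq_mul, Fin.isValue,
    Pi.add_apply] at h ⊢
  norm_num at h ⊢
  nlinarith [h]

/-- Linear convergence of a first-order method under the global
Regularity Condition RC(μ,λ), given a feasible solution `P ≻ 0`, `ρ ∈ (0,1)` of the LMI. -/
theorem agd_linear_convergence_of_LMI {n : ℕ}
    (f : EuclideanSpace ℝ (Fin n) → ℝ)
    (μ lam : ℝ) (hμ : 0 < μ) (hlam : 0 < lam)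
    (hdiff : Differentiable ℝ f)
    (xs : EuclideanSpace ℝ (Fin n))
    (hmin : ∀ z, f xs ≤ f z)
    (hgrad0 : gradient f xs = 0)
    (hRC : ∀ z : EuclideanSpace ℝ (Fin n),
      ⟪gradient f z, z - xs⟫_ℝ ≥ μ / 2 * ‖gradient f z‖ ^ 2 + lam / 2 * ‖z - xs‖ ^ 2)
    (A : Matrix (Fin 2) (Fin 2) ℝ) (B : Matrix (Fin 2) (Fin 1) ℝ)
    (C : Matrix (Fin 1) (Fin 2) ℝ) (D : ℝ)
    (φ : ℕ → EuclideanSpace ℝ (Fin 2 × Fin n))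
    (y u : ℕ → EuclideanSpace ℝ (Fin n))
    (hstate : ∀ k, φ (k + 1) =
      (A ⊗ₖ (1 : Matrix (Fin n) (Fin n) ℝ)).mulVec (φ k) +
      (B ⊗ₖ (1 : Matrix (Fin n) (Fin n) ℝ)).mulVec (fun p => u k p.2))
    (hy : ∀ k, y k = fun i =>
      (C ⊗ₖ (1 : Matrix (Fin n) (Fin n) ℝ)).mulVec (φ k) (0, i) + D * u k i)
    (hu : ∀ k, u k = gradient f (y k))
    (φs : EuclideanSpace ℝ (Fin 2 × Fin n))
    (hφs : φs = fun (p : Fin 2 × Fin n) => xs p.2)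
    (hfixA : (A ⊗ₖ (1 : Matrix (Fin n) (Fin n) ℝ)).mulVec φs = φs)
    (hfixC : ∀ i, (C ⊗ₖ (1 : Matrix (Fin n) (Fin n) ℝ)).mulVec φs (0, i) = xs i)
    (P : Matrix (Fin 2) (Fin 2) ℝ) (hP : P.IsHermitian) (hPpos : P.PosDef)
    (ρ : ℝ) (hρ : ρ ∈ Set.Ioo (0 : ℝ) 1)
    (hLMI : (-(fromBlocks (Aᵀ * P * A - ρ ^ 2 • P) (Aᵀ * P * B) (Bᵀ * P * A) (Bᵀ * P * B) +
      (fromBlocks C (D • (1 : Matrix (Fin 1) (Fin 1) ℝ)) 0 (1 : Matrix (Fin 1) (Fin 1) ℝ))ᵀ *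
      (fromBlocks (-lam • (1 : Matrix (Fin 1) (Fin 1) ℝ)) (1 : Matrix (Fin 1) (Fin 1) ℝ)
        (1 : Matrix (Fin 1) (Fin 1) ℝ) (-μ • (1 : Matrix (Fin 1) (Fin 1) ℝ))) *
      (fromBlocks C (D • (1 : Matrix (Fin 1) (Fin 1) ℝ)) 0 (1 : Matrix (Fin 1) (Fin 1) ℝ)))).PosSemidef) :
    ∀ k, ‖φ k - φs‖ ≤
      Real.sqrt ((⨆ i, hP.eigenvalues i) / (⨅ i, hP.eigenvalues i)) * ρ ^ k * ‖φ 0 - φs‖ := by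
  obtain ⟨hρ0, hρ1⟩ := hρ
  -- error slices
  set E : ℕ → Fin n → Fin 2 → ℝ := fun k i a => φ k (a, i) - xs i with hE
  set V : ℕ → ℝ := fun k => ∑ i, E k i ⬝ᵥ P *ᵥ E k i with hV
  -- recursion for the slices
  have hrec : ∀ k i, E (k + 1) i = A *ᵥ E k i + B *ᵥ (fun _ => u k i) := by
    intro k i
    funext a
    have h1 : φ (k + 1) (a, i) =
        (A ⊗ₖ (1 : Matrix (Fin n) (Fin n) ℝ)).mulVec (φ k) (a, i) +
        (B ⊗ₖ (1 : Matrix (Fin n) (Fin n) ℝ)).mulVec (fun p => u k p.2) (a, i) :=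
      congrFun (hstate k) (a, i)
    have h2 : (∑ b, A a b * φs (b, i)) = φs (a, i) := by
      rw [← kron_one_mulVec' A φs a i]; exact congrFun hfixA (a, i)
    have hφsv : ∀ b : Fin 2, φs (b, i) = xs i := by intro b; rw [hφs]
    rw [kron_one_mulVec', kron_one_mulVec'] at h1
    simp only [hE, Pi.add_apply, Matrix.mulVec, dotProduct, Fin.sum_univ_two,
      Fin.sum_univ_one]
    simp only [hφsv] at h2
    simp only [Fin.sum_univ_two, Fin.sum_univ_one] at h1 h2
    rw [h1]
    linarith [h2]
  -- output equation for the slices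
  have hg : ∀ k i, y k i - xs i = (C *ᵥ E k i) 0 + D * u k i := by
    intro k i
    have h1 : y k i =
        (C ⊗ₖ (1 : Matrix (Fin n) (Fin n) ℝ)).mulVec (φ k) (0, i) + D * u k i :=
      congrFun (hy k) i
    have h2 : (∑ b, C 0 b * φs (b, i)) = xs i := by
      rw [← kron_one_mulVec' C φs 0 i]; exact hfixC i
    have hφsv : ∀ b : Fin 2, φs (b, i) = xs i := by intro b; rw [hφs]
    rw [kron_one_mulVec'] at h1
    simp only [hφsv] at h2
    simp only [hE, Matrix.mulVec, dotProduct, Fin.sum_univ_two] at h1 h2 ⊢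
    rw [h1]
    linarith [h2]
  -- one-step Lyapunov decrease
  have hVstep : ∀ k, V (k + 1) ≤ ρ ^ 2 * V k := by
    intro k
    have key : ∀ i, E (k + 1) i ⬝ᵥ P *ᵥ E (k + 1) i ≤
        ρ ^ 2 * (E k i ⬝ᵥ P *ᵥ E k i) +
        (lam * (y k i - xs i) ^ 2 - 2 * (u k i * (y k i - xs i)) + μ * (u k i) ^ 2) := by
      intro i
      rw [hrec k i, hg k i]
      exact key_quad_ineq' A B C D P ρ lam μ hLMI (E k i) (u k i)
    have hsum : ∑ i, (lam * (y k i - xs i) ^ 2 - 2 * (u k i * (y k i - xs i)) +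
        μ * (u k i) ^ 2) ≤ 0 := by
      have hrc := hRC (y k)
      rw [← hu k] at hrc
      have hinner : ⟪u k, y k - xs⟫_ℝ = ∑ i, u k i * (y k i - xs i) := by
        rw [PiLp.inner_apply]
        simp [RCLike.inner_apply, PiLp.sub_apply, mul_comm]
      have hnu : ‖u k‖ ^ 2 = ∑ i, (u k i) ^ 2 := by
        rw [← real_inner_self_eq_norm_sq, PiLp.inner_apply]
        simp [RCLike.inner_apply, sq]
      have hny : ‖y k - xs‖ ^ 2 = ∑ i, (y k i - xs i) ^ 2 := by
        rw [← real_inner_self_eq_norm_sq, PiLp.inner_apply]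
        simp [RCLike.inner_apply, PiLp.sub_apply, sq]
      rw [hinner, hnu, hny] at hrc
      have expand : ∑ i, (lam * (y k i - xs i) ^ 2 - 2 * (u k i * (y k i - xs i)) +
          μ * (u k i) ^ 2) = lam * (∑ i, (y k i - xs i) ^ 2) -
          2 * (∑ i, u k i * (y k i - xs i)) + μ * (∑ i, (u k i) ^ 2) := by
        simp only [Finset.sum_add_distrib, Finset.sum_sub_distrib, Finset.mul_sum]
      rw [expand]
      linarith
    calc V (k + 1) = ∑ i, E (k + 1) i ⬝ᵥ P *ᵥ E (k + 1) i := rfl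
      _ ≤ ∑ i, (ρ ^ 2 * (E k i ⬝ᵥ P *ᵥ E k i) +
          (lam * (y k i - xs i) ^ 2 - 2 * (u k i * (y k i - xs i)) + μ * (u k i) ^ 2)) :=
        Finset.sum_le_sum fun i _ => key i
      _ = ρ ^ 2 * V k + ∑ i, (lam * (y k i - xs i) ^ 2 - 2 * (u k i * (y k i - xs i)) +
          μ * (u k i) ^ 2) := by
        rw [Finset.sum_add_distrib, ← Finset.mul_sum]
      _ ≤ ρ ^ 2 * V k := by linarith
  -- iterate
  have hVk : ∀ k, V k ≤ (ρ ^ 2) ^ k * V 0 := by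
    intro k
    induction k with
    | zero => simp
    | succ m ih =>
      calc V (m + 1) ≤ ρ ^ 2 * V m := hVstep m
        _ ≤ ρ ^ 2 * ((ρ ^ 2) ^ m * V 0) := by
          apply mul_le_mul_of_nonneg_left ih (by positivity)
        _ = (ρ ^ 2) ^ (m + 1) * V 0 := by ring
  -- norms and slices
  have hnorm : ∀ k, ‖φ k - φs‖ ^ 2 = ∑ i, E k i ⬝ᵥ E k i := by
    intro k
    rw [← real_inner_self_eq_norm_sq, PiLp.inner_apply]
    simp only [RCLike.inner_apply, starRingEnd_apply, star_trivial, PiLp.sub_apply]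
    rw [Fintype.sum_prod_type]
    rw [Finset.sum_comm]
    apply Finset.sum_congr rfl
    intro i _
    simp [dotProduct, hE, hφs, sq]
  -- eigenvalue bounds
  set lmin : ℝ := ⨅ i, hP.eigenvalues i with hlmin
  set lmax : ℝ := ⨆ i, hP.eigenvalues i with hlmax
  have hevpos : ∀ i, 0 < hP.eigenvalues i := fun i => hPpos.eigenvalues_pos i
  have hlminpos : 0 < lmin := by
    obtain ⟨j, hj⟩ := Finite.exists_min hP.eigenvalues
    have : lmin = hP.eigenvalues j :=
      le_antisymm (ciInf_le (Finite.bddBelow_range _) j) (le_ciInf hj)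
    rw [this]; exact hevpos j
  have hlmaxpos : 0 < lmax := by
    have := le_ciSup (Finite.bddAbove_range hP.eigenvalues) (0 : Fin 2)
    exact lt_of_lt_of_le (hevpos 0) this
  have hlow : ∀ k, lmin * ‖φ k - φs‖ ^ 2 ≤ V k := by
    intro k
    rw [hnorm k, Finset.mul_sum]
    exact Finset.sum_le_sum fun i _ => (quad_form_bounds' P hP (E k i)).1
  have hup : V 0 ≤ lmax * ‖φ 0 - φs‖ ^ 2 := by
    rw [hnorm 0, Finset.mul_sum]
    exact Finset.sum_le_sum fun i _ => (quad_form_bounds' P hP (E 0 i)).2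
  -- conclude
  intro k
  have hsq : ‖φ k - φs‖ ^ 2 ≤ (lmax / lmin) * ((ρ ^ k) ^ 2 * ‖φ 0 - φs‖ ^ 2) := by
    have c1 : lmin * ‖φ k - φs‖ ^ 2 ≤ (ρ ^ 2) ^ k * (lmax * ‖φ 0 - φs‖ ^ 2) := by
      calc lmin * ‖φ k - φs‖ ^ 2 ≤ V k := hlow k
        _ ≤ (ρ ^ 2) ^ k * V 0 := hVk k
        _ ≤ (ρ ^ 2) ^ k * (lmax * ‖φ 0 - φs‖ ^ 2) :=
          mul_le_mul_of_nonneg_left hup (by positivity)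
    have hpow : (ρ ^ 2) ^ k = (ρ ^ k) ^ 2 := by rw [← pow_mul, ← pow_mul, Nat.mul_comm]
    rw [div_mul_eq_mul_div, ← mul_assoc, le_div_iff₀ hlminpos]
    calc ‖φ k - φs‖ ^ 2 * lmin = lmin * ‖φ k - φs‖ ^ 2 := by ring
      _ ≤ (ρ ^ 2) ^ k * (lmax * ‖φ 0 - φs‖ ^ 2) := c1
      _ = lmax * (ρ ^ k) ^ 2 * ‖φ 0 - φs‖ ^ 2 := by rw [hpow]; ring
  have := Real.sqrt_le_sqrt hsq
  rw [Real.sqrt_sq (norm_nonneg _)] at this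
  rw [Real.sqrt_mul (by positivity) ] at this
  rw [Real.sqrt_mul (by positivity), Real.sqrt_sq (by positivity),
    Real.sqrt_sq (norm_nonneg _)] at this
  calc ‖φ k - φs‖ ≤ Real.sqrt (lmax / lmin) * (ρ ^ k * ‖φ 0 - φs‖) := this
    _ = Real.sqrt (lmax / lmin) * ρ ^ k * ‖φ 0 - φs‖ := by ring
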